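/- Let T be a phylogenetic tree and let G be its distance graph, with laminar family F, subgraph g consisting of all edges of G lying in at least one MST, and J_v the set of neighbors of v in g. For a labeled vertex v, let S_v be a subcollection of F of minimum cardinality among all subcollections S ⊆ F satisfying J_v ⊆ ⋃S and v ∉ ⋃S. Then the maximum degree of v over all MSTs of G satisfies δ_max(v) = |S_v|. -/

import Mathlib

open SimpleGraph

/-- The threshold subgraph `G_{≤ t}`: same vertices, only edges of weight `≤ t`. -/
def thresholdGraph {V : Type*} (G : SimpleGraph V) (w : Sym2 V → ℝ) (t : ℝ) :
    SimpleGraph V where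
  Adj u v := G.Adj u v ∧ w s(u, v) ≤ t
  symm := by
    constructor
    intro u v hv
    exact ⟨hv.1.symm, by rw [Sym2.eq_swap]; exact hv.2⟩
  loopless := ⟨fun v hv => hv.1.ne rfl⟩

/-- The strict threshold subgraph `G_{< t}`. -/
def strictThresholdGraph {V : Type*} (G : SimpleGraph V) (w : Sym2 V → ℝ) (t : ℝ) :
    SimpleGraph V where
  Adj u v := G.Adj u v ∧ w s(u, v) < t
  symm := by
    constructor
    intro u v hv
    exact ⟨hv.1.symm, by rw [Sym2.eq_swap]; exact hv.2⟩
  loopless := ⟨fun v hv => hv.1.ne rfl⟩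

/-- The laminar family of an edge-weighted graph: the whole vertex set together with the
vertex sets of the connected components of every threshold subgraph. -/
def laminarFamily {V : Type*} (G : SimpleGraph V) (w : Sym2 V → ℝ) : Set (Set V) :=
  insert Set.univ
    {S | ∃ (t : ℝ) (C : (thresholdGraph G w t).ConnectedComponent), S = C.supp}

/-- `M` is a spanning tree of `G`. -/
def IsSpanningTree {V : Type*} (G M : SimpleGraph V) : Prop :=
  M ≤ G ∧ M.IsTree

/-- Total weight of (the edges of) a graph. -/
noncomputable def totalWeight {V : Type*} [Finite V] (M : SimpleGraph V)
    (w : Sym2 V → ℝ) : ℝ :=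
  ∑ e ∈ M.edgeSet.toFinite.toFinset, w e

/-- `M` is a minimum spanning tree of `G` with respect to the weights `w`. -/
def IsMST {V : Type*} [Finite V] (G : SimpleGraph V) (w : Sym2 V → ℝ)
    (M : SimpleGraph V) : Prop :=
  IsSpanningTree G M ∧ ∀ M' : SimpleGraph V, IsSpanningTree G M' →
    totalWeight M w ≤ totalWeight M' w

/-- A phylogenetic tree: a finite tree with strictly positive edge lengths and a nonempty
set `L` of labeled vertices, each hidden vertex having degree at least 3. -/
structure PhyloTree (V : Type*) where
  finV : Finite V
  T : SimpleGraph V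
  isTree : T.IsTree
  len : Sym2 V → ℝ
  len_pos : ∀ e ∈ T.edgeSet, 0 < len e
  L : Set V
  L_nonempty : L.Nonempty
  hidden_deg : ∀ v, v ∉ L → 3 ≤ (T.neighborSet v).ncard

namespace PhyloTree

variable {V : Type*}

/-- The unique path between two vertices of the tree. -/
noncomputable def path (P : PhyloTree V) (u v : V) : P.T.Walk u v :=
  (P.isTree.existsUnique_path u v).exists.choose

lemma path_isPath (P : PhyloTree V) (u v : V) : (P.path u v).IsPath :=
  (P.isTree.existsUnique_path u v).exists.choose_spec

/-- The tree distance: the sum of the edge lengths along the unique path. -/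
noncomputable def dist (P : PhyloTree V) (u v : V) : ℝ :=
  ((P.path u v).edges.map P.len).sum

lemma dist_comm (P : PhyloTree V) (u v : V) : P.dist u v = P.dist v u := by
  have h : (P.path u v).reverse = P.path v u :=
    (P.isTree.existsUnique_path v u).unique ((P.path_isPath u v).reverse)
      (P.path_isPath v u)
  unfold dist
  rw [← h, SimpleGraph.Walk.edges_reverse, List.map_reverse, List.sum_reverse]

/-- The tree distance as a symmetric function on unordered pairs. -/
noncomputable def wdist (P : PhyloTree V) : Sym2 V → ℝ :=
  Sym2.lift ⟨fun u v => P.dist u v, fun u v => P.dist_comm u v⟩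

/-- The surrogate set of a vertex: the labeled vertices closest to it. -/
def Sg (P : PhyloTree V) (h : V) : Set V :=
  {l | l ∈ P.L ∧ ∀ l' ∈ P.L, P.dist l h ≤ P.dist l' h}

/-- `s` is the surrogate vertex `Sg_R(h)` of `h` w.r.t. the ranking `R`:
the element of the surrogate set of `h` of smallest `R`-value. -/
def IsSgR (P : PhyloTree V) (R : V → ℕ) (h : V) (s : V) : Prop :=
  s ∈ P.Sg h ∧ ∀ l ∈ P.Sg h, R s ≤ R l

/-- The edge weights of the distance graph of `P` (the complete graph on `↥P.L`). -/
noncomputable def wG (P : PhyloTree V) : Sym2 ↥P.L → ℝ :=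
  fun e => P.wdist (e.map Subtype.val)

/-- An edge `e` of the distance graph lying in at least one MST (i.e. an edge of `g`). -/
def mstEdge (P : PhyloTree V) (e : Sym2 ↥P.L) : Prop :=
  haveI := P.finV
  ∃ M : SimpleGraph ↥P.L, IsMST (⊤ : SimpleGraph ↥P.L) P.wG M ∧ e ∈ M.edgeSet

/-- `δ_max(v)`: the maximum degree of `v` over all MSTs of the distance graph. -/
noncomputable def deltaMax (P : PhyloTree V) (v : ↥P.L) : ℕ :=
  haveI := P.finV
  sSup {d : ℕ | ∃ M : SimpleGraph ↥P.L,
    IsMST (⊤ : SimpleGraph ↥P.L) P.wG M ∧ d = (M.neighborSet v).ncard}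

end PhyloTree

/-- The smaller of the two ranks of the endpoints of an edge. -/
def sym2MinR {α : Type*} (R : α → ℕ) : Sym2 α → ℕ :=
  Sym2.lift ⟨fun a b => min (R a) (R b), fun a b => min_comm _ _⟩

/-- The larger of the two ranks of the endpoints of an edge. -/
def sym2MaxR {α : Type*} (R : α → ℕ) : Sym2 α → ℕ :=
  Sym2.lift ⟨fun a b => max (R a) (R b), fun a b => max_comm _ _⟩

/-- The strict total order `<_R` on edges: first by weight, then by the smaller rank of
the endpoints, then by the larger rank of the endpoints. -/
def edgeLT {α : Type*} (w : Sym2 α → ℝ) (R : α → ℕ) (e f : Sym2 α) : Prop :=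
  w e < w f ∨ (w e = w f ∧ (sym2MinR R e < sym2MinR R f ∨
    (sym2MinR R e = sym2MinR R f ∧ sym2MaxR R e < sym2MaxR R f)))

/-- `M` is the vertex-ranked MST of `G` w.r.t. the ranking `R`: a spanning tree such that
every non-tree edge `{u,v}` of `G` is the `<_R`-greatest edge of the cycle it closes,
i.e. every edge of the `M`-path from `u` to `v` is `<_R`-smaller than `{u,v}`. -/
def IsVRMST {α : Type*} (G : SimpleGraph α) (w : Sym2 α → ℝ) (R : α → ℕ)
    (M : SimpleGraph α) : Prop :=
  IsSpanningTree G M ∧ ∀ u v : α, G.Adj u v → ¬M.Adj u v →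
    ∀ p : M.Walk u v, p.IsPath → ∀ f ∈ p.edges, edgeLT w R f s(u, v)

section Helpers
open SimpleGraph
variable {α : Type*}

lemma eq_of_isolated {G : SimpleGraph α} {a b : α} (h : ∀ x, ¬ G.Adj a x)
    (hr : G.Reachable a b) : a = b := by
  obtain ⟨p⟩ := hr
  cases p with
  | nil => rfl
  | cons h' p => exact absurd h' (h _)

/-- The star graph centered at `c`. -/
def starGraph (c : α) : SimpleGraph α where
  Adj a b := a ≠ b ∧ (a = c ∨ b = c)
  symm := by constructor; rintro a b ⟨h1, h2⟩; exact ⟨h1.symm, h2.symm⟩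
  loopless := by constructor; rintro a ⟨h1, _⟩; exact h1 rfl

lemma starGraph_isTree [Nonempty α] (c : α) : (_root_.starGraph c).IsTree := by
  constructor
  · constructor
    intro a b
    have key : ∀ x : α, (_root_.starGraph c).Reachable x c := by
      intro x
      by_cases hx : x = c
      · exact hx ▸ Reachable.refl x
      · exact (Adj.reachable (⟨hx, Or.inr rfl⟩ : _ ∧ _))
    exact (key a).trans (key b).symm
  · rw [isAcyclic_iff_forall_adj_isBridge]
    have key : ∀ a : α, a ≠ c → (_root_.starGraph c).IsBridge s(a, c) := by
      intro a ha
      rw [isBridge_iff]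
      intro hr
      have : ∀ x, ¬ (_root_.starGraph c \ fromEdgeSet {s(a, c)}).Adj a x := by
        rintro x ⟨⟨hax, hc⟩, hne⟩
        rw [fromEdgeSet_adj] at hne
        push_neg at hne
        rcases hc with rfl | rfl
        · exact ha rfl
        · exact hax (hne (by simp))
      exact ha (eq_of_isolated this hr)
    rintro a b ⟨hab, hc | hc⟩
    · subst hc
      rw [Sym2.eq_swap]
      exact key b (Ne.symm hab)
    · subst hc
      exact key a hab

lemma exists_MST [Fintype α] [Nonempty α] (w : Sym2 α → ℝ) :
    ∃ M, IsMST (⊤ : SimpleGraph α) w M := by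
  classical
  have hfin : Finite (SimpleGraph α) :=
    Finite.of_injective (fun G => G.Adj) (fun G H h => SimpleGraph.ext h)
  have hST : {M : SimpleGraph α | IsSpanningTree ⊤ M}.Finite := Set.toFinite _
  have hne : {M : SimpleGraph α | IsSpanningTree ⊤ M}.Nonempty :=
    ⟨_root_.starGraph (Classical.arbitrary α), le_top, _root_.starGraph_isTree _⟩
  obtain ⟨M, hM, hMle⟩ :=
    Set.exists_min_image _ (fun M => totalWeight M w) hST hne
  exact ⟨M, hM, fun M' hM' => hMle M' hM'⟩

end Helpers
section Surgery
open SimpleGraph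
variable {α : Type*}

lemma delete_not_reachable {M : SimpleGraph α} (hM : M.IsTree) {a b : α} (hab : M.Adj a b) :
    ¬ (M.deleteEdges {s(a, b)}).Reachable a b := by
  classical
  intro hr
  obtain ⟨p0⟩ := hr
  have hp : p0.toPath.val.IsPath := p0.toPath.prop
  have hsub : ∀ f ∈ p0.toPath.val.edges, f ∈ M.edgeSet := by
    intro f hf
    have := p0.toPath.val.edges_subset_edgeSet hf
    rw [edgeSet_deleteEdges] at this
    exact this.1
  have hq : (p0.toPath.val.transfer M hsub).IsPath := hp.transfer _
  have h1 : (Walk.cons hab Walk.nil).IsPath := by simp [hab.ne]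
  have huniq := (hM.existsUnique_path a b).unique hq h1
  have hmem : s(a, b) ∈ (p0.toPath.val.transfer M hsub).edges := by
    rw [huniq]; simp
  rw [Walk.edges_transfer] at hmem
  have := p0.toPath.val.edges_subset_edgeSet hmem
  rw [edgeSet_deleteEdges] at this
  exact this.2 rfl

lemma delete_reach_or {M : SimpleGraph α} (hM : M.IsTree) {a b : α} (hab : M.Adj a b) (z : α) :
    (M.deleteEdges {s(a, b)}).Reachable a z ∨ (M.deleteEdges {s(a, b)}).Reachable b z := by
  have step : ∀ {u v : α}, M.Adj u v →
      ((M.deleteEdges {s(a, b)}).Reachable a u ∨ (M.deleteEdges {s(a, b)}).Reachable b u) →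
      ((M.deleteEdges {s(a, b)}).Reachable a v ∨ (M.deleteEdges {s(a, b)}).Reachable b v) := by
    intro u v huv h
    by_cases hc : s(u, v) = s(a, b)
    · rw [Sym2.eq_iff] at hc
      rcases hc with ⟨rfl, rfl⟩ | ⟨rfl, rfl⟩
      · exact Or.inr (Reachable.refl _)
      · exact Or.inl (Reachable.refl _)
    · have hadj : (M.deleteEdges {s(a, b)}).Adj u v := by
        rw [deleteEdges_adj]
        exact ⟨huv, by simpa using hc⟩
      exact h.imp (fun h' => h'.trans hadj.reachable) (fun h' => h'.trans hadj.reachable)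
  have main : ∀ (u : α) (q : M.Walk u z),
      ((M.deleteEdges {s(a, b)}).Reachable a u ∨ (M.deleteEdges {s(a, b)}).Reachable b u) →
      ((M.deleteEdges {s(a, b)}).Reachable a z ∨ (M.deleteEdges {s(a, b)}).Reachable b z) := by
    intro u q
    induction q with
    | nil => exact fun h => h
    | cons h' q ih => exact fun hx => ih (step h' hx)
  obtain ⟨p⟩ := hM.isConnected a z
  exact main a p (Or.inl (Reachable.refl _))

lemma swap_spanning_tree [Fintype α] (w : Sym2 α → ℝ) {M : SimpleGraph α} (hM : M.IsTree)
    {a b x y : α} (hab : M.Adj a b)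
    (hxy : ¬ (M.deleteEdges {s(a, b)}).Reachable x y) :
    ((M.deleteEdges {s(a, b)}) ⊔ fromEdgeSet {s(x, y)}).IsTree ∧
      totalWeight ((M.deleteEdges {s(a, b)}) ⊔ fromEdgeSet {s(x, y)}) w
        = totalWeight M w - w s(a, b) + w s(x, y) := by
  classical
  set M0 := M.deleteEdges {s(a, b)} with hM0
  set N := M0 ⊔ fromEdgeSet {s(x, y)} with hN
  have hxyne : x ≠ y := by rintro rfl; exact hxy (Reachable.refl _)
  have hnot_mem : s(x, y) ∉ M0.edgeSet := fun h => hxy (Adj.reachable h)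
  have hopp : (M0.Reachable a x ∧ M0.Reachable b y) ∨ (M0.Reachable b x ∧ M0.Reachable a y) := by
    rcases delete_reach_or hM hab x with h1 | h1 <;> rcases delete_reach_or hM hab y with h2 | h2
    · exact absurd (h1.symm.trans h2) hxy
    · exact Or.inl ⟨h1, h2⟩
    · exact Or.inr ⟨h1, h2⟩
    · exact absurd (h1.symm.trans h2) hxy
  have hM0N : M0 ≤ N := le_sup_left
  have hadjN : N.Adj x y := by
    rw [hN, sup_adj, fromEdgeSet_adj]
    exact Or.inr ⟨rfl, hxyne⟩
  have hreachN : ∀ z, N.Reachable a z := by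
    have hab' : N.Reachable a b := by
      rcases hopp with ⟨h1, h2⟩ | ⟨h1, h2⟩
      · exact ((h1.mono hM0N).trans hadjN.reachable).trans (h2.mono hM0N).symm
      · exact ((h2.mono hM0N).trans hadjN.reachable.symm).trans (h1.mono hM0N).symm
    intro z
    rcases delete_reach_or hM hab z with h | h
    · exact h.mono hM0N
    · exact hab'.trans (h.mono hM0N)
  have hconn : N.Connected := by
    have : Nonempty α := ⟨a⟩
    exact Connected.mk fun u v => (hreachN u).symm.trans (hreachN v)
  have hsdiff : N \ fromEdgeSet {s(x, y)} = M0 := by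
    ext p q
    simp only [sdiff_adj, hN, sup_adj, fromEdgeSet_adj, Set.mem_singleton_iff]
    constructor
    · rintro ⟨h1 | ⟨h1a, h1b⟩, h2⟩
      · exact h1
      · exact absurd ⟨h1a, h1b⟩ h2
    · intro h
      refine ⟨Or.inl h, ?_⟩
      rintro ⟨heq, -⟩
      exact hnot_mem (heq ▸ M0.mem_edgeSet.mpr h)
  have hbridge : N.IsBridge s(x, y) := by
    rw [isBridge_iff, show N.deleteEdges {s(x, y)} = M0 from hsdiff]; exact hxy
  have hacyc : N.IsAcyclic := by
    intro v c hc
    have hxy_not : s(x, y) ∉ c.edges :=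
      (isBridge_iff_forall_cycle_notMem hadjN).mp hbridge c hc
    have hsub : ∀ f ∈ c.edges, f ∈ M.edgeSet := by
      intro f hf
      have h1 : f ∈ N.edgeSet := c.edges_subset_edgeSet hf
      rw [hN, edgeSet_sup, edgeSet_fromEdgeSet] at h1
      rcases h1 with h1 | ⟨h1, -⟩
      · rw [hM0, edgeSet_deleteEdges] at h1
        exact h1.1
      · rw [Set.mem_singleton_iff] at h1
        exact absurd (h1 ▸ hf) hxy_not
    exact hM.IsAcyclic (c.transfer M hsub) (hc.transfer hsub)
  refine ⟨⟨hconn, hacyc⟩, ?_⟩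
  have hedge : N.edgeSet = (M.edgeSet \ {s(a, b)}) ∪ {s(x, y)} := by
    rw [hN, edgeSet_sup, edgeSet_fromEdgeSet, hM0, edgeSet_deleteEdges]
    congr 1
    ext f
    simp only [Set.mem_diff, Set.mem_singleton_iff, Set.mem_setOf_eq]
    constructor
    · exact fun h => h.1
    · rintro rfl
      exact ⟨rfl, by simp [hxyne]⟩
  have heM : s(a, b) ∈ M.edgeSet.toFinite.toFinset := by
    rw [Set.Finite.mem_toFinset]; exact M.mem_edgeSet.mpr hab
  have hxy_not' : s(x, y) ∉ (M.edgeSet.toFinite.toFinset).erase s(a, b) := by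
    intro hmem
    rw [Finset.mem_erase, Set.Finite.mem_toFinset] at hmem
    exact hnot_mem (by rw [hM0, edgeSet_deleteEdges]; exact ⟨hmem.2, by simpa using hmem.1⟩)
  have hfin1 : N.edgeSet.toFinite.toFinset
      = insert s(x, y) ((M.edgeSet.toFinite.toFinset).erase s(a, b)) := by
    ext f
    rw [Set.Finite.mem_toFinset, hedge, Finset.mem_insert, Finset.mem_erase,
      Set.Finite.mem_toFinset]
    simp only [Set.mem_union, Set.mem_diff, Set.mem_singleton_iff]
    tauto
  rw [totalWeight, totalWeight, hfin1, Finset.sum_insert hxy_not',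
    Finset.sum_erase_eq_sub heM]
  ring

end Surgery
section Threshold
open SimpleGraph
variable {α : Type*}

lemma exists_matching_threshold [Fintype α] (w : Sym2 α → ℝ) (t : ℝ) :
    ∃ t', ∀ e : Sym2 α, w e ≤ t' ↔ w e < t := by
  classical
  by_cases hA : ∃ e : Sym2 α, w e < t
  · set A := Finset.univ.filter (fun e : Sym2 α => w e < t) with hAdef
    have hAne : A.Nonempty := by
      obtain ⟨e, he⟩ := hA
      exact ⟨e, by simp [hAdef, he]⟩
    have hmax := (A.image w).max'_mem (hAne.image w)
    rw [Finset.mem_image] at hmax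
    obtain ⟨f, hf, hfw⟩ := hmax
    refine ⟨(A.image w).max' (hAne.image w), fun e => ⟨fun h => ?_, fun h => ?_⟩⟩
    · rw [← hfw] at h
      rw [hAdef, Finset.mem_filter] at hf
      exact lt_of_le_of_lt h hf.2
    · exact Finset.le_max' _ _ (Finset.mem_image_of_mem w (by simp [hAdef, h]))
  · push_neg at hA
    refine ⟨t - 1, fun e => ⟨fun h => ?_, fun h => absurd h (not_lt.mpr (hA e))⟩⟩
    linarith [hA e]

lemma strict_eq_threshold {w : Sym2 α → ℝ} {t t' : ℝ}
    (h : ∀ e : Sym2 α, w e ≤ t' ↔ w e < t) :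
    strictThresholdGraph (⊤ : SimpleGraph α) w t = thresholdGraph (⊤ : SimpleGraph α) w t' := by
  ext a b
  constructor
  · rintro (⟨h1, h2⟩ : _ ∧ _)
    exact (⟨h1, (h _).mpr h2⟩ : _ ∧ _)
  · rintro (⟨h1, h2⟩ : _ ∧ _)
    exact (⟨h1, (h _).mp h2⟩ : _ ∧ _)

lemma cut_bound [Fintype α] {w : Sym2 α → ℝ} {M : SimpleGraph α}
    (hM : IsMST (⊤ : SimpleGraph α) w M) {v u z : α} (h : M.Adj v u) {t : ℝ}
    (hr : (thresholdGraph (⊤ : SimpleGraph α) w t).Reachable u z)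
    (hz : ¬ (M.deleteEdges {s(v, u)}).Reachable u z) :
    w s(v, u) ≤ t := by
  classical
  obtain ⟨p⟩ := hr
  obtain ⟨d, hd, hdS, hdS'⟩ :=
    p.exists_boundary_dart {p | (M.deleteEdges {s(v, u)}).Reachable u p} (Reachable.refl u) hz
  have hwd : w s(d.fst, d.snd) ≤ t := (d.adj : _ ∧ _).2
  have hndr : ¬ (M.deleteEdges {s(v, u)}).Reachable d.fst d.snd := fun hr' =>
    hdS' (Set.mem_setOf_eq ▸ (Set.mem_setOf_eq ▸ hdS).trans hr')
  obtain ⟨htree, hweight⟩ := swap_spanning_tree w hM.1.2 h hndr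
  have hle := hM.2 _ ⟨le_top, htree⟩
  rw [hweight] at hle
  linarith

lemma not_strict_reach [Fintype α] {w : Sym2 α → ℝ} {M : SimpleGraph α}
    (hM : IsMST (⊤ : SimpleGraph α) w M) {v u : α} (h : M.Adj v u) :
    ¬ (strictThresholdGraph (⊤ : SimpleGraph α) w (w s(v, u))).Reachable u v := by
  intro hr
  obtain ⟨t', ht'⟩ := exists_matching_threshold w (w s(v, u))
  rw [strict_eq_threshold ht'] at hr
  have hnr : ¬ (M.deleteEdges {s(v, u)}).Reachable u v :=
    fun hr' => delete_not_reachable hM.1.2 h hr'.symm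
  have := cut_bound hM h hr hnr
  exact lt_irrefl _ ((ht' _).mp this)

end Threshold
section PartB
open SimpleGraph
variable {α : Type*}

lemma degree_le_cover [Fintype α] {w : Sym2 α → ℝ} {M : SimpleGraph α}
    (hM : IsMST (⊤ : SimpleGraph α) w M) (v : α) (Sv : Set (Set α))
    (hsub : Sv ⊆ laminarFamily (⊤ : SimpleGraph α) w)
    (hcov : M.neighborSet v ⊆ ⋃₀ Sv)
    (hv : v ∉ ⋃₀ Sv) :
    (M.neighborSet v).ncard ≤ Sv.ncard := by
  classical
  have hchoice : ∀ u : α, ∃ S : Set α, u ∈ M.neighborSet v → S ∈ Sv ∧ u ∈ S := by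
    intro u
    by_cases hu : u ∈ M.neighborSet v
    · obtain ⟨S, hS1, hS2⟩ := hcov hu
      exact ⟨S, fun _ => ⟨hS1, hS2⟩⟩
    · exact ⟨∅, fun h => absurd h hu⟩
  choose g hg using hchoice
  apply Set.ncard_le_ncard_of_injOn g (fun u hu => (hg u hu).1) _ (Set.toFinite _)
  intro u hu u' hu' heq
  by_contra hne
  have hadj : M.Adj v u := hu
  have hadj' : M.Adj v u' := hu'
  have hSv : g u ∈ Sv := (hg u hu).1
  have huS : u ∈ g u := (hg u hu).2
  have hu'S : u' ∈ g u := heq ▸ (hg u' hu').2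
  have hvS : v ∉ g u := fun h => hv ⟨g u, hSv, h⟩
  rcases hsub hSv with hS | ⟨t, C, hC⟩
  · exact hvS (hS ▸ Set.mem_univ v)
  rw [hC] at huS hu'S hvS
  rw [ConnectedComponent.mem_supp_iff] at huS hu'S
  have hreach : (thresholdGraph (⊤ : SimpleGraph α) w t).Reachable u u' :=
    ConnectedComponent.exact (huS.trans hu'S.symm)
  have hwvu : ¬ w s(v, u) ≤ t := by
    intro hle
    apply hvS
    rw [ConnectedComponent.mem_supp_iff, ← huS]
    exact ConnectedComponent.sound (Adj.reachable (⟨hadj.ne, hle⟩ : _ ∧ _))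
  have hnr : ¬ (M.deleteEdges {s(v, u)}).Reachable u u' := by
    intro hr'
    have hvu' : (M.deleteEdges {s(v, u)}).Reachable v u' := by
      apply Adj.reachable
      rw [deleteEdges_adj]
      refine ⟨hadj', ?_⟩
      simp only [Set.mem_singleton_iff, Sym2.eq_iff]
      rintro (⟨-, rfl⟩ | ⟨rfl, -⟩)
      · exact hne rfl
      · exact M.irrefl hadj
    exact delete_not_reachable hM.1.2 hadj (hvu'.trans hr'.symm)
  exact hwvu (cut_bound hM hadj hreach hnr)

end PartB
section PartC
open SimpleGraph
variable {α : Type*}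

lemma path_edge_separates {M : SimpleGraph α} (hM : M.IsTree) {v z : α}
    (p : M.Walk v z) (hp : p.IsPath) {a b : α} (hab : M.Adj a b) (hf : s(a, b) ∈ p.edges) :
    ¬ (M.deleteEdges {s(a, b)}).Reachable v z := by
  classical
  intro hr
  obtain ⟨q0⟩ := hr
  have hsub : ∀ f ∈ q0.toPath.val.edges, f ∈ M.edgeSet := by
    intro f hf'
    have := q0.toPath.val.edges_subset_edgeSet hf'
    rw [edgeSet_deleteEdges] at this
    exact this.1
  have hq : (q0.toPath.val.transfer M hsub).IsPath := (q0.toPath.prop).transfer _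
  have huniq := (hM.existsUnique_path v z).unique hq hp
  have hmem : s(a, b) ∈ (q0.toPath.val.transfer M hsub).edges := huniq ▸ hf
  rw [Walk.edges_transfer] at hmem
  have h2 := q0.toPath.val.edges_subset_edgeSet hmem
  rw [edgeSet_deleteEdges] at h2
  exact h2.2 rfl

lemma cover_exists [Fintype α] (w : Sym2 α → ℝ) {M : SimpleGraph α}
    (hM : IsMST (⊤ : SimpleGraph α) w M) (v : α)
    (hmax : ∀ M' : SimpleGraph α, IsMST (⊤ : SimpleGraph α) w M' →
      (M'.neighborSet v).ncard ≤ (M.neighborSet v).ncard) :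
    ∃ S' ⊆ laminarFamily (⊤ : SimpleGraph α) w,
      {u : α | ∃ M₀, IsMST (⊤ : SimpleGraph α) w M₀ ∧ s(v, u) ∈ M₀.edgeSet} ⊆ ⋃₀ S' ∧
      v ∉ ⋃₀ S' ∧ S'.ncard ≤ (M.neighborSet v).ncard := by
  classical
  choose tm htm using exists_matching_threshold (α := α) w
  set Cset : α → Set α := fun u =>
    ((thresholdGraph (⊤ : SimpleGraph α) w (tm (w s(v, u)))).connectedComponentMk u).supp
    with hCset
  refine ⟨Cset '' (M.neighborSet v), ?_, ?_, ?_, Set.ncard_image_le (Set.toFinite _)⟩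
  · rintro S ⟨u, hu, rfl⟩
    exact Or.inr ⟨tm (w s(v, u)), _, rfl⟩
  · rintro u' hu'
    obtain ⟨M₀, hM₀, he₀⟩ := hu'
    have hadj₀ : M₀.Adj v u' := he₀
    have hvne : v ≠ u' := hadj₀.ne
    by_cases hadj : M.Adj v u'
    · exact ⟨Cset u', ⟨u', hadj, rfl⟩, (ConnectedComponent.mem_supp_iff _ _).mpr rfl⟩
    · set t' := w s(v, u') with ht'def
      obtain ⟨p, hp, -⟩ := hM.1.2.existsUnique_path v u'
      have hstrictv : ¬ (strictThresholdGraph (⊤ : SimpleGraph α) w t').Reachable u' v :=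
        not_strict_reach hM₀ hadj₀
      -- (i) every edge of p has weight ≤ t'
      have hi' : ∀ a b : α, s(a, b) ∈ p.edges → w s(a, b) ≤ t' := by
        intro a b hfmem
        have hab : M.Adj a b := p.edges_subset_edgeSet hfmem
        have hsep := path_edge_separates hM.1.2 p hp hab hfmem
        obtain ⟨htree, hweight⟩ := swap_spanning_tree w hM.1.2 hab hsep
        have hle := hM.2 _ ⟨le_top, htree⟩
        rw [hweight] at hle
        linarith
      have hi : ∀ f ∈ p.edges, w f ≤ t' := by
        intro f
        induction f using Sym2.ind with
        | _ a b => exact hi' a b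
      -- (iii) every edge of p of weight t' is incident to v
      have hiii : ∀ a b : α, s(a, b) ∈ p.edges → w s(a, b) = t' → v = a ∨ v = b := by
        intro a b hfmem hfw
        by_contra hvf
        push_neg at hvf
        have hab : M.Adj a b := p.edges_subset_edgeSet hfmem
        have hsep := path_edge_separates hM.1.2 p hp hab hfmem
        obtain ⟨htree, hweight⟩ := swap_spanning_tree w hM.1.2 hab hsep
        set N := (M.deleteEdges {s(a, b)}) ⊔ fromEdgeSet {s(v, u')} with hNdef
        have hNmst : IsMST (⊤ : SimpleGraph α) w N := by
          refine ⟨⟨le_top, htree⟩, fun M'' hM'' => ?_⟩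
          have h1 := hM.2 M'' hM''
          rw [hweight, hfw, ← ht'def]
          linarith
        have hdegN : insert u' (M.neighborSet v) ⊆ N.neighborSet v := by
          intro z hz
          rcases Set.mem_insert_iff.mp hz with rfl | hz
          · show N.Adj v z
            rw [hNdef, sup_adj, fromEdgeSet_adj]
            exact Or.inr ⟨rfl, hvne⟩
          · show N.Adj v z
            rw [hNdef, sup_adj, deleteEdges_adj]
            refine Or.inl ⟨hz, ?_⟩
            simp only [Set.mem_singleton_iff, Sym2.eq_iff]
            rintro (⟨rfl, rfl⟩ | ⟨rfl, rfl⟩)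
            · exact hvf.1 rfl
            · exact hvf.2 rfl
        have hcard : (M.neighborSet v).ncard + 1 ≤ (N.neighborSet v).ncard := by
          have h1 : (insert u' (M.neighborSet v)).ncard = (M.neighborSet v).ncard + 1 :=
            Set.ncard_insert_of_notMem hadj (Set.toFinite _)
          rw [← h1]
          exact Set.ncard_le_ncard hdegN (Set.toFinite _)
        have := hmax N hNmst
        omega
      -- decompose the path
      cases p with
      | nil => exact absurd rfl hvne
      | cons h q =>
        rename_i b
        have hq : q.IsPath := ((Walk.cons_isPath_iff _ _).mp hp).1
        have hvq : v ∉ q.support := ((Walk.cons_isPath_iff _ _).mp hp).2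
        have hqlt : ∀ a c : α, s(a, c) ∈ q.edges → w s(a, c) < t' := by
          intro a c hf
          have h1 : w s(a, c) ≤ t' := hi _ (by simp [hf])
          rcases h1.lt_or_eq with hlt | heq
          · exact hlt
          · exfalso
            rcases hiii a c (by simp [hf]) heq with rfl | rfl
            · exact hvq (q.fst_mem_support_of_mem_edges hf)
            · exact hvq (q.snd_mem_support_of_mem_edges hf)
        have hqlt' : ∀ f ∈ q.edges, w f < t' := by
          intro f
          induction f using Sym2.ind with
          | _ a c => exact hqlt a c
        have hfirst : w s(v, b) = t' := by
          rcases (hi s(v, b) (by simp)).lt_or_eq with hlt | heq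
          · exfalso
            apply hstrictv
            have hsubp : ∀ f ∈ (Walk.cons h q).edges,
                f ∈ (strictThresholdGraph (⊤ : SimpleGraph α) w t').edgeSet := by
              intro f hf
              have hfE : f ∈ M.edgeSet := (Walk.cons h q).edges_subset_edgeSet hf
              have hflt : w f < t' := by
                rcases (by simpa using hf : f = s(v, b) ∨ f ∈ q.edges) with rfl | h1
                · exact hlt
                · exact hqlt' f h1
              revert hfE hflt
              induction f using Sym2.ind with
              | _ a c =>
                intro hfE hflt
                exact ((⟨(hfE : M.Adj a c).ne, hflt⟩ : _ ∧ _) :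
                  (strictThresholdGraph (⊤ : SimpleGraph α) w t').Adj a c)
            exact (((Walk.cons h q).transfer _ hsubp).reachable).symm
          · exact heq
        -- all edges of q are < t', so u' is in the strict component of b
        have hsubq : ∀ f ∈ q.edges,
            f ∈ (strictThresholdGraph (⊤ : SimpleGraph α) w t').edgeSet := by
          intro f hf
          have hfE : f ∈ M.edgeSet := q.edges_subset_edgeSet hf
          have hflt : w f < t' := hqlt' f hf
          revert hfE hflt
          induction f using Sym2.ind with
          | _ a c =>
            intro hfE hflt
            exact ((⟨(hfE : M.Adj a c).ne, hflt⟩ : _ ∧ _) :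
              (strictThresholdGraph (⊤ : SimpleGraph α) w t').Adj a c)
        have hreach : (strictThresholdGraph (⊤ : SimpleGraph α) w t').Reachable b u' :=
          (q.transfer _ hsubq).reachable
        rw [strict_eq_threshold (htm t')] at hreach
        refine ⟨Cset b, ⟨b, h, rfl⟩, ?_⟩
        show u' ∈ ((thresholdGraph (⊤ : SimpleGraph α) w (tm (w s(v, b)))).connectedComponentMk
          b).supp
        rw [hfirst]
        exact (ConnectedComponent.mem_supp_iff _ _).mpr (ConnectedComponent.sound hreach.symm)
  · rintro ⟨S, ⟨u, hu, rfl⟩, hvS⟩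
    rw [ConnectedComponent.mem_supp_iff] at hvS
    have hre : (thresholdGraph (⊤ : SimpleGraph α) w (tm (w s(v, u)))).Reachable u v :=
      (ConnectedComponent.exact hvS).symm
    rw [← strict_eq_threshold (htm _)] at hre
    exact not_strict_reach hM hu hre

end PartC
/-- `δ_max(v)` equals the cardinality of a minimum subcollection of the
laminar family covering the neighborhood of `v` in `g` while avoiding `v`. -/
theorem deltaMax_eq_min_cover_card {V : Type*} (P : PhyloTree V) (v : ↥P.L)
    (Sv : Set (Set ↥P.L))
    (hsub : Sv ⊆ laminarFamily (⊤ : SimpleGraph ↥P.L) P.wG)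
    (hcov : {u : ↥P.L | P.mstEdge s(v, u)} ⊆ ⋃₀ Sv)
    (hv : v ∉ ⋃₀ Sv)
    (hmin : ∀ S' ⊆ laminarFamily (⊤ : SimpleGraph ↥P.L) P.wG,
      {u : ↥P.L | P.mstEdge s(v, u)} ⊆ ⋃₀ S' → v ∉ ⋃₀ S' → Sv.ncard ≤ S'.ncard) :
    P.deltaMax v = Sv.ncard := by
  classical
  haveI := P.finV
  haveI : Fintype ↥P.L := Fintype.ofFinite _
  haveI : Nonempty ↥P.L := P.L_nonempty.to_subtype
  set w := P.wG with hw
  set D := {d : ℕ | ∃ M : SimpleGraph ↥P.L,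
      IsMST (⊤ : SimpleGraph ↥P.L) w M ∧ d = (M.neighborSet v).ncard} with hD
  have hDne : D.Nonempty := by
    obtain ⟨M, hM⟩ := exists_MST (α := ↥P.L) w
    exact ⟨_, M, hM, rfl⟩
  have hDbdd : BddAbove D := by
    refine ⟨Fintype.card ↥P.L, ?_⟩
    rintro d ⟨M, hM, rfl⟩
    have := Set.ncard_le_ncard (Set.subset_univ (M.neighborSet v)) (Set.toFinite _)
    simpa [Set.ncard_univ, Nat.card_eq_fintype_card] using this
  have hsup : P.deltaMax v = sSup D := rfl
  obtain ⟨M, hM, hMd⟩ : ∃ M, IsMST (⊤ : SimpleGraph ↥P.L) w M ∧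
      sSup D = (M.neighborSet v).ncard := Nat.sSup_mem hDne hDbdd
  rw [hsup]
  apply le_antisymm
  · apply csSup_le hDne
    rintro d ⟨M', hM', rfl⟩
    apply degree_le_cover hM' v Sv hsub _ hv
    intro u hu
    exact hcov (show P.mstEdge s(v, u) from ⟨M', hM', hu⟩)
  · have hmax : ∀ M' : SimpleGraph ↥P.L, IsMST (⊤ : SimpleGraph ↥P.L) w M' →
        (M'.neighborSet v).ncard ≤ (M.neighborSet v).ncard := by
      intro M' hM'
      rw [← hMd]
      exact le_csSup hDbdd ⟨M', hM', rfl⟩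
    obtain ⟨S', hS'sub, hS'cov, hS'v, hS'card⟩ := cover_exists w hM v hmax
    rw [hMd]
    refine le_trans (hmin S' hS'sub ?_ hS'v) hS'card
    intro u hu
    exact hS'cov hu
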